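/- There exists a saturated equiangular set of 28 lines in R^14 with common angle arccos(1/5); that is, there is a set X of 28 unit vectors in R^14, pairwise non-parallel, such that |⟨v,w⟩| = 1/5 for all distinct v,w ∈ X, and there is no unit vector u in the linear span of X with u ∉ X ∪ (−X) satisfying |⟨u,x⟩| = 1/5 for all x ∈ X. -/

import Mathlib

namespace Sat28

def ML : List (List ℤ) := [
  [5, 1, -1, 1, 1, -1, -1, -1, -1, 1, 1, -1, 1, 1, 1, 1, -1, 1, -1, 1, 1, -1, -1, 1, 1, 1],
  [1, 5, 1, -1, 1, 1, -1, -1, -1, -1, 1, 1, -1, 1, 1, 1, 1, -1, 1, -1, 1, 1, -1, -1, 1, 1],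
  [-1, 1, 5, 1, -1, 1, 1, -1, -1, -1, -1, 1, 1, 1, 1, 1, 1, 1, -1, 1, -1, 1, 1, -1, -1, 1],
  [1, -1, 1, 5, 1, -1, 1, 1, -1, -1, -1, -1, 1, 1, 1, 1, 1, 1, 1, -1, 1, -1, 1, 1, -1, -1],
  [1, 1, -1, 1, 5, 1, -1, 1, 1, -1, -1, -1, -1, -1, 1, 1, 1, 1, 1, 1, -1, 1, -1, 1, 1, -1],
  [-1, 1, 1, -1, 1, 5, 1, -1, 1, 1, -1, -1, -1, -1, -1, 1, 1, 1, 1, 1, 1, -1, 1, -1, 1, 1],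
  [-1, -1, 1, 1, -1, 1, 5, 1, -1, 1, 1, -1, -1, 1, -1, -1, 1, 1, 1, 1, 1, 1, -1, 1, -1, 1],
  [-1, -1, -1, 1, 1, -1, 1, 5, 1, -1, 1, 1, -1, 1, 1, -1, -1, 1, 1, 1, 1, 1, 1, -1, 1, -1],
  [-1, -1, -1, -1, 1, 1, -1, 1, 5, 1, -1, 1, 1, -1, 1, 1, -1, -1, 1, 1, 1, 1, 1, 1, -1, 1],
  [1, -1, -1, -1, -1, 1, 1, -1, 1, 5, 1, -1, 1, 1, -1, 1, 1, -1, -1, 1, 1, 1, 1, 1, 1, -1],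
  [1, 1, -1, -1, -1, -1, 1, 1, -1, 1, 5, 1, -1, -1, 1, -1, 1, 1, -1, -1, 1, 1, 1, 1, 1, 1],
  [-1, 1, 1, -1, -1, -1, -1, 1, 1, -1, 1, 5, 1, 1, -1, 1, -1, 1, 1, -1, -1, 1, 1, 1, 1, 1],
  [1, -1, 1, 1, -1, -1, -1, -1, 1, 1, -1, 1, 5, 1, 1, -1, 1, -1, 1, 1, -1, -1, 1, 1, 1, 1],
  [1, 1, 1, 1, -1, -1, 1, 1, -1, 1, -1, 1, 1, 5, -1, 1, -1, -1, 1, 1, 1, 1, -1, -1, 1, -1],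
  [1, 1, 1, 1, 1, -1, -1, 1, 1, -1, 1, -1, 1, -1, 5, -1, 1, -1, -1, 1, 1, 1, 1, -1, -1, 1],
  [1, 1, 1, 1, 1, 1, -1, -1, 1, 1, -1, 1, -1, 1, -1, 5, -1, 1, -1, -1, 1, 1, 1, 1, -1, -1],
  [-1, 1, 1, 1, 1, 1, 1, -1, -1, 1, 1, -1, 1, -1, 1, -1, 5, -1, 1, -1, -1, 1, 1, 1, 1, -1],
  [1, -1, 1, 1, 1, 1, 1, 1, -1, -1, 1, 1, -1, -1, -1, 1, -1, 5, -1, 1, -1, -1, 1, 1, 1, 1],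
  [-1, 1, -1, 1, 1, 1, 1, 1, 1, -1, -1, 1, 1, 1, -1, -1, 1, -1, 5, -1, 1, -1, -1, 1, 1, 1],
  [1, -1, 1, -1, 1, 1, 1, 1, 1, 1, -1, -1, 1, 1, 1, -1, -1, 1, -1, 5, -1, 1, -1, -1, 1, 1],
  [1, 1, -1, 1, -1, 1, 1, 1, 1, 1, 1, -1, -1, 1, 1, 1, -1, -1, 1, -1, 5, -1, 1, -1, -1, 1],
  [-1, 1, 1, -1, 1, -1, 1, 1, 1, 1, 1, 1, -1, 1, 1, 1, 1, -1, -1, 1, -1, 5, -1, 1, -1, -1],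
  [-1, -1, 1, 1, -1, 1, -1, 1, 1, 1, 1, 1, 1, -1, 1, 1, 1, 1, -1, -1, 1, -1, 5, -1, 1, -1],
  [1, -1, -1, 1, 1, -1, 1, -1, 1, 1, 1, 1, 1, -1, -1, 1, 1, 1, 1, -1, -1, 1, -1, 5, -1, 1],
  [1, 1, -1, -1, 1, 1, -1, 1, -1, 1, 1, 1, 1, 1, -1, -1, 1, 1, 1, 1, -1, -1, 1, -1, 5, -1],
  [1, 1, 1, -1, -1, 1, 1, -1, 1, -1, 1, 1, 1, -1, 1, -1, -1, 1, 1, 1, 1, -1, -1, 1, -1, 5]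
]

def eps2 : List ℤ := [-1, -1, 1, 1, 1, 1, 1, 1, 1, 1, -1, 1, 1, 1, -1, 1, 1, 1, 1, 1, -1, 1, 1, 1, 1, -1]

def CZ : List (List ℤ) := [
  [15, 0, 0, 0, 0, 0, 0, 0, 0, 0, 0, 0, 0],
  [0, 15, 0, 0, 0, 0, 0, 0, 0, 0, 0, 0, 0],
  [0, 0, 15, 0, 0, 0, 0, 0, 0, 0, 0, 0, 0],
  [0, 0, 0, 15, 0, 0, 0, 0, 0, 0, 0, 0, 0],
  [0, 0, 0, 0, 15, 0, 0, 0, 0, 0, 0, 0, 0],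
  [0, 0, 0, 0, 0, 15, 0, 0, 0, 0, 0, 0, 0],
  [0, 0, 0, 0, 0, 0, 15, 0, 0, 0, 0, 0, 0],
  [0, 0, 0, 0, 0, 0, 0, 15, 0, 0, 0, 0, 0],
  [0, 0, 0, 0, 0, 0, 0, 0, 15, 0, 0, 0, 0],
  [0, 0, 0, 0, 0, 0, 0, 0, 0, 15, 0, 0, 0],
  [0, 0, 0, 0, 0, 0, 0, 0, 0, 0, 15, 0, 0],
  [0, 0, 0, 0, 0, 0, 0, 0, 0, 0, 0, 15, 0],
  [0, 0, 0, 0, 0, 0, 0, 0, 0, 0, 0, 0, 15],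
  [5, 10, 0, 0, -5, -5, 5, 10, -5, 10, -15, 5, 0],
  [0, 5, 10, 0, 0, -5, -5, 5, 10, -5, 10, -15, 5],
  [5, 0, 5, 10, 0, 0, -5, -5, 5, 10, -5, 10, -15],
  [-15, 5, 0, 5, 10, 0, 0, -5, -5, 5, 10, -5, 10],
  [10, -15, 5, 0, 5, 10, 0, 0, -5, -5, 5, 10, -5],
  [-5, 10, -15, 5, 0, 5, 10, 0, 0, -5, -5, 5, 10],
  [10, -5, 10, -15, 5, 0, 5, 10, 0, 0, -5, -5, 5],
  [5, 10, -5, 10, -15, 5, 0, 5, 10, 0, 0, -5, -5],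
  [-5, 5, 10, -5, 10, -15, 5, 0, 5, 10, 0, 0, -5],
  [-5, -5, 5, 10, -5, 10, -15, 5, 0, 5, 10, 0, 0],
  [0, -5, -5, 5, 10, -5, 10, -15, 5, 0, 5, 10, 0],
  [0, 0, -5, -5, 5, 10, -5, 10, -15, 5, 0, 5, 10],
  [10, 0, 0, -5, -5, 5, 10, -5, 10, -15, 5, 0, 5]
]

def gz1 : List ℤ := [3, 3, 3, 3, 3, 3, 3, 3, 3, 3, 3, 3, 3]
def gz2 : List ℤ := [-3, -3, 2, 2, 7, 2, 2, 2, -3, 7, -3, 7, 2]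

def one26 : List ℤ := List.replicate 26 1

def row (j : Fin 26) : List ℤ := ML.getD j []

def qdot (L1 L2 : List ℤ) : ℤ := ∑ k : Fin 27, L1.getD k 0 * L2.getD k 0

set_option maxRecDepth 100000

theorem fQ : ∀ i j : Fin 26, qdot (row i) (row j) = 10 * (row i).getD j 0 := by decide
theorem fFrame : ∀ j : Fin 26, ∀ k : Fin 27,
    (∑ i : Fin 26, (row j).getD i 0 * (row i).getD k 0) = 10 * (row j).getD k 0 := by decide
theorem fSum : ∀ k : Fin 27, (∑ i : Fin 26, (row i).getD k 0) = 10 * one26.getD k 0 := by decide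
theorem fEpsSum : ∀ k : Fin 27,
    (∑ i : Fin 26, eps2.getD i 0 * (row i).getD k 0) = 10 * eps2.getD k 0 := by decide
theorem fXone : ∀ i : Fin 26, qdot (row i) one26 = 10 := by decide
theorem fXeps : ∀ i : Fin 26, qdot (row i) eps2 = 10 * eps2.getD i 0 := by decide
theorem fonone : qdot one26 one26 = 26 := by decide
theorem fee : qdot eps2 eps2 = 26 := by decide
theorem fone_eps : qdot one26 eps2 = 14 := by decide
theorem fOff : ∀ i j : Fin 26, i ≠ j → (row i).getD j 0 = 1 ∨ (row i).getD j 0 = -1 := by decide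
theorem fEpsPM : ∀ i : Fin 26, eps2.getD i 0 = 1 ∨ eps2.getD i 0 = -1 := by decide
theorem fEps12 : (∑ i : Fin 26, (1 - eps2.getD i 0)) = 12 := by decide
theorem fRow26 : ∀ i : Fin 26, (row i).getD 26 0 = 0 := by decide
theorem fOne26 : one26.getD 26 0 = 0 := by decide
theorem fEps26 : eps2.getD 26 0 = 0 := by decide
theorem fC : ∀ j : Fin 26, ∀ k : Fin 27,
    (∑ t : Fin 13, (CZ.getD j []).getD t 0 * (ML.getD t []).getD k 0) = 15 * (row j).getD k 0 := by
  decide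
theorem fG1 : ∀ k : Fin 27,
    (∑ t : Fin 13, gz1.getD t 0 * (ML.getD t []).getD k 0) = 15 * one26.getD k 0 := by decide
theorem fG2 : ∀ k : Fin 27,
    (∑ t : Fin 13, gz2.getD t 0 * (ML.getD t []).getD k 0) = 15 * eps2.getD k 0 := by decide



noncomputable section

open Finset

local notation "⟬" x ", " y "⟭" => (inner (𝕜 := ℝ) x y)

abbrev E := EuclideanSpace ℝ (Fin 27)

def vecE (L : List ℤ) : E := WithLp.toLp 2 (fun k : Fin 27 => ((L.getD k 0 : ℤ) : ℝ))

lemma inner_vecE (L1 L2 : List ℤ) : ⟬vecE L1, vecE L2⟭ = ((qdot L1 L2 : ℤ) : ℝ) := by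
  simp only [PiLp.inner_apply, RCLike.inner_apply, conj_trivial, vecE, qdot]
  push_cast
  exact Finset.sum_congr rfl fun _ _ => mul_comm _ _

def ee : E := EuclideanSpace.single (26 : Fin 27) (1 : ℝ)

lemma inner_vecE_ee (L : List ℤ) : ⟬vecE L, ee⟭ = ((L.getD 26 0 : ℤ) : ℝ) := by
  rw [ee, EuclideanSpace.inner_single_right]
  simp only [conj_trivial, one_mul, vecE]
  rfl

lemma norm_ee : ‖ee‖ = 1 := by
  rw [ee, EuclideanSpace.norm_single]; norm_num

def s50 : ℝ := (Real.sqrt 50)⁻¹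

lemma s50_sq : s50 * s50 = 1 / 50 := by
  rw [s50, ← mul_inv, Real.mul_self_sqrt (by norm_num)]
  norm_num

def q12 : ℝ := Real.sqrt 12 / 5

lemma q12_sq : q12 * q12 = 12 / 25 := by
  rw [q12, div_mul_div_comm, Real.mul_self_sqrt (by norm_num)]
  norm_num

def x (j : Fin 26) : E := s50 • vecE (row j)

def y1 : E := s50 • vecE one26 + q12 • ee

def y2 : E := s50 • vecE eps2 - q12 • ee

lemma inner_x_x (i j : Fin 26) : ⟬x i, x j⟭ = (((row i).getD j 0 : ℤ) : ℝ) / 5 := by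
  rw [x, x, real_inner_smul_left, real_inner_smul_right, inner_vecE, fQ, ← mul_assoc, s50_sq]
  push_cast
  ring

lemma inner_x_ee (i : Fin 26) : ⟬x i, ee⟭ = 0 := by
  rw [x, real_inner_smul_left, inner_vecE_ee, fRow26]
  norm_num

lemma inner_ee_ee : ⟬ee, ee⟭ = 1 := by
  rw [real_inner_self_eq_norm_sq, norm_ee]; norm_num

lemma inner_x_y1 (i : Fin 26) : ⟬x i, y1⟭ = 1 / 5 := by
  rw [y1, inner_add_right, real_inner_smul_right, real_inner_smul_right, inner_x_ee,
    x, real_inner_smul_left, inner_vecE, fXone, ← mul_assoc, s50_sq]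
  norm_num

lemma inner_x_y2 (i : Fin 26) : ⟬x i, y2⟭ = ((eps2.getD i 0 : ℤ) : ℝ) / 5 := by
  rw [y2, inner_sub_right, real_inner_smul_right, real_inner_smul_right, inner_x_ee,
    x, real_inner_smul_left, inner_vecE, fXeps, ← mul_assoc, s50_sq]
  push_cast
  ring

lemma inner_y1_y2 : ⟬y1, y2⟭ = -(1 / 5) := by
  simp only [y1, y2, inner_add_left, inner_add_right, inner_sub_left, inner_sub_right,
    real_inner_smul_left, real_inner_smul_right]
  rw [inner_vecE, inner_vecE_ee, inner_ee_ee, fone_eps, fOne26]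
  have h1 : ⟬ee, vecE eps2⟭ = (0:ℝ) := by
    rw [real_inner_comm, inner_vecE_ee, fEps26]; norm_num
  have h2 : ⟬ee, vecE one26⟭ = (0:ℝ) := by
    rw [real_inner_comm, inner_vecE_ee, fOne26]; norm_num
  simp only [h1, h2]
  push_cast
  nlinarith [s50_sq, q12_sq]

lemma inner_y1_y1 : ⟬y1, y1⟭ = 1 := by
  simp only [y1, y2, inner_add_left, inner_add_right, inner_sub_left, inner_sub_right,
    real_inner_smul_left, real_inner_smul_right]
  rw [inner_vecE, inner_vecE_ee, inner_ee_ee, fonone, fOne26]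
  have h1 : ⟬ee, vecE eps2⟭ = (0:ℝ) := by
    rw [real_inner_comm, inner_vecE_ee, fEps26]; norm_num
  have h2 : ⟬ee, vecE one26⟭ = (0:ℝ) := by
    rw [real_inner_comm, inner_vecE_ee, fOne26]; norm_num
  simp only [h1, h2]
  push_cast
  nlinarith [s50_sq, q12_sq]

lemma inner_y2_y2 : ⟬y2, y2⟭ = 1 := by
  simp only [y1, y2, inner_add_left, inner_add_right, inner_sub_left, inner_sub_right,
    real_inner_smul_left, real_inner_smul_right]
  rw [inner_vecE, inner_vecE_ee, inner_ee_ee, fee, fEps26]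
  have h1 : ⟬ee, vecE eps2⟭ = (0:ℝ) := by
    rw [real_inner_comm, inner_vecE_ee, fEps26]; norm_num
  have h2 : ⟬ee, vecE one26⟭ = (0:ℝ) := by
    rw [real_inner_comm, inner_vecE_ee, fOne26]; norm_num
  simp only [h1, h2]
  push_cast
  nlinarith [s50_sq, q12_sq]

lemma norm_one_of_inner {v : E} (h : ⟬v, v⟭ = 1) : ‖v‖ = 1 := by
  rw [real_inner_self_eq_norm_sq] at h
  nlinarith [norm_nonneg v]

lemma fDiag : ∀ i : Fin 26, (row i).getD i 0 = 5 := by decide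

lemma norm_x (i : Fin 26) : ‖x i‖ = 1 := by
  apply norm_one_of_inner
  rw [inner_x_x, fDiag]
  norm_num

lemma norm_y1 : ‖y1‖ = 1 := norm_one_of_inner inner_y1_y1
lemma norm_y2 : ‖y2‖ = 1 := norm_one_of_inner inner_y2_y2

lemma sum_smul_vecE_apply {n : ℕ} (c : Fin n → ℝ) (L : Fin n → List ℤ) (k : Fin 27) :
    (∑ i, c i • vecE (L i)) k = ∑ i, c i * (((L i).getD k 0 : ℤ) : ℝ) := by
  induction n with
  | zero => simp
  | succ m ih =>
      rw [Fin.sum_univ_succ, Fin.sum_univ_succ, ← ih (fun i => c i.succ) (fun i => L i.succ)]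
      rw [PiLp.add_apply, PiLp.smul_apply]
      rfl

lemma smul_vecE_apply (a : ℝ) (L : List ℤ) (k : Fin 27) :
    (a • vecE L) k = a * ((L.getD k 0 : ℤ) : ℝ) := by
  rw [PiLp.smul_apply]
  rfl

lemma combo_row (j : Fin 26) :
    (15 : ℝ) • vecE (row j) =
      ∑ t : Fin 13, (((CZ.getD j []).getD t 0 : ℤ) : ℝ) • vecE (ML.getD t []) := by
  ext k
  rw [sum_smul_vecE_apply, smul_vecE_apply]
  exact_mod_cast (fC j k).symm

lemma combo_one :
    (15 : ℝ) • vecE one26 = ∑ t : Fin 13, ((gz1.getD t 0 : ℤ) : ℝ) • vecE (ML.getD t []) := by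
  ext k
  rw [sum_smul_vecE_apply, smul_vecE_apply]
  exact_mod_cast (fG1 k).symm

lemma combo_eps :
    (15 : ℝ) • vecE eps2 = ∑ t : Fin 13, ((gz2.getD t 0 : ℤ) : ℝ) • vecE (ML.getD t []) := by
  ext k
  rw [sum_smul_vecE_apply, smul_vecE_apply]
  exact_mod_cast (fG2 k).symm

lemma combo_sum :
    (∑ i : Fin 26, (1 : ℝ) • vecE (row i)) = (10 : ℝ) • vecE one26 := by
  ext k
  rw [sum_smul_vecE_apply, smul_vecE_apply]
  simp only [one_smul, one_mul]
  exact_mod_cast (fSum k)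

lemma combo_epsSum :
    (∑ i : Fin 26, ((eps2.getD i 0 : ℤ) : ℝ) • vecE (row i)) = (10 : ℝ) • vecE eps2 := by
  ext k
  rw [sum_smul_vecE_apply, smul_vecE_apply]
  exact_mod_cast (fEpsSum k)

lemma combo_frame (j : Fin 26) :
    (∑ i : Fin 26, (((row j).getD i 0 : ℤ) : ℝ) • vecE (row i)) = (10 : ℝ) • vecE (row j) := by
  ext k
  rw [sum_smul_vecE_apply, smul_vecE_apply]
  exact_mod_cast (fFrame j k)

def x13 : Fin 13 → E := fun t => x ⟨t.1, by omega⟩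

def W0 : Submodule ℝ E := Submodule.span ℝ (Set.range x13)

lemma row_cast (t : Fin 13) : row ⟨t.1, by omega⟩ = ML.getD t.1 [] := rfl

lemma x_mem_W0 (j : Fin 26) : x j ∈ W0 := by
  have hx : x j = ∑ t : Fin 13, ((((CZ.getD j []).getD t 0 : ℤ) : ℝ) / 15) • x13 t := by
    have h15 : vecE (row j) = (15 : ℝ)⁻¹ • ((15 : ℝ) • vecE (row j)) := by
      rw [smul_smul]; norm_num
    rw [x, h15, combo_row, Finset.smul_sum, Finset.smul_sum]
    refine Finset.sum_congr rfl fun t _ => ?_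
    show s50 • ((15:ℝ)⁻¹ • (_ • vecE (ML.getD t.1 []))) = _
    rw [smul_smul, smul_smul, x13, x, row_cast, smul_smul]
    congr 1
    ring
  rw [hx]
  exact Submodule.sum_mem _ fun t _ =>
    Submodule.smul_mem _ _ (Submodule.subset_span ⟨t, rfl⟩)

lemma svec_one_mem_W0 : s50 • vecE one26 ∈ W0 := by
  have hx : s50 • vecE one26 = ∑ t : Fin 13, (((gz1.getD t 0 : ℤ) : ℝ) / 15) • x13 t := by
    have h15 : vecE one26 = (15 : ℝ)⁻¹ • ((15 : ℝ) • vecE one26) := by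
      rw [smul_smul]; norm_num
    rw [h15, combo_one, Finset.smul_sum, Finset.smul_sum]
    refine Finset.sum_congr rfl fun t _ => ?_
    show s50 • ((15:ℝ)⁻¹ • (_ • vecE (ML.getD t.1 []))) = _
    rw [smul_smul, smul_smul, x13, x, row_cast, smul_smul]
    congr 1
    ring
  rw [hx]
  exact Submodule.sum_mem _ fun t _ =>
    Submodule.smul_mem _ _ (Submodule.subset_span ⟨t, rfl⟩)

lemma svec_eps_mem_W0 : s50 • vecE eps2 ∈ W0 := by
  have hx : s50 • vecE eps2 = ∑ t : Fin 13, (((gz2.getD t 0 : ℤ) : ℝ) / 15) • x13 t := by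
    have h15 : vecE eps2 = (15 : ℝ)⁻¹ • ((15 : ℝ) • vecE eps2) := by
      rw [smul_smul]; norm_num
    rw [h15, combo_eps, Finset.smul_sum, Finset.smul_sum]
    refine Finset.sum_congr rfl fun t _ => ?_
    show s50 • ((15:ℝ)⁻¹ • (_ • vecE (ML.getD t.1 []))) = _
    rw [smul_smul, smul_smul, x13, x, row_cast, smul_smul]
    congr 1
    ring
  rw [hx]
  exact Submodule.sum_mem _ fun t _ =>
    Submodule.smul_mem _ _ (Submodule.subset_span ⟨t, rfl⟩)

lemma frame_x (j : Fin 26) : (∑ i : Fin 26, ⟬x j, x i⟭ • x i) = (2 : ℝ) • x j := by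
  have step : ∀ i : Fin 26, ⟬x j, x i⟭ • x i
      = (s50 / 5) • ((((row j).getD i 0 : ℤ) : ℝ) • vecE (row i)) := by
    intro i
    rw [inner_x_x j i, x, smul_smul, smul_smul]
    congr 1
    ring
  rw [Finset.sum_congr rfl fun i _ => step i, ← Finset.smul_sum, combo_frame j, x,
    smul_smul, smul_smul]
  congr 1
  ring

def K1 : Submodule ℝ E where
  carrier := {v | ⟬v, ee⟭ = (0 : ℝ)}
  add_mem' := by
    intro a b ha hb
    simp only [Set.mem_setOf_eq, inner_add_left] at *
    rw [ha, hb]; ring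
  zero_mem' := by simp
  smul_mem' := by
    intro c a ha
    simp only [Set.mem_setOf_eq, real_inner_smul_left] at *
    rw [ha]; ring

def K2 : Submodule ℝ E where
  carrier := {v | (∑ i : Fin 26, ⟬v, x i⟭ • x i) = (2 : ℝ) • v}
  add_mem' := by
    intro a b ha hb
    simp only [Set.mem_setOf_eq, inner_add_left, add_smul, Finset.sum_add_distrib] at *
    rw [ha, hb, smul_add]
  zero_mem' := by simp
  smul_mem' := by
    intro c a ha
    simp only [Set.mem_setOf_eq, real_inner_smul_left, mul_smul, ← Finset.smul_sum] at *
    rw [ha, smul_comm]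

lemma W0_le_K1 : W0 ≤ K1 := by
  rw [W0, Submodule.span_le]
  rintro _ ⟨t, rfl⟩
  exact inner_x_ee _

lemma W0_le_K2 : W0 ≤ K2 := by
  rw [W0, Submodule.span_le]
  rintro _ ⟨t, rfl⟩
  exact frame_x _

def F : Fin 28 → E := fun k =>
  if h : (k : ℕ) < 26 then x ⟨k.1, h⟩ else if (k : ℕ) = 26 then y1 else y2

lemma F_lt (k : Fin 28) (h : (k : ℕ) < 26) : F k = x ⟨k.1, h⟩ := dif_pos h

lemma F_x (i : Fin 26) : F ⟨i.1, by omega⟩ = x i := by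
  rw [F_lt ⟨i.1, by omega⟩ i.2]

lemma F_y1 : F ⟨26, by omega⟩ = y1 := by simp [F]

lemma F_y2 : F ⟨27, by omega⟩ = y2 := by simp [F]

lemma normF (k : Fin 28) : ‖F k‖ = 1 := by
  by_cases h : (k : ℕ) < 26
  · rw [F_lt k h]; exact norm_x _
  · by_cases h6 : (k : ℕ) = 26
    · have : F k = y1 := by simp [F, h, h6]
      rw [this]; exact norm_y1
    · have : F k = y2 := by simp [F, h, h6]
      rw [this]; exact norm_y2

lemma abs_inner_x_x {i j : Fin 26} (hij : i ≠ j) : |⟬x i, x j⟭| = 1 / 5 := by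
  rw [inner_x_x]
  rcases fOff i j hij with h | h <;> rw [h] <;> norm_num

lemma abs_inner_x_y1 (i : Fin 26) : |⟬x i, y1⟭| = 1 / 5 := by
  rw [inner_x_y1]; norm_num

lemma abs_inner_x_y2 (i : Fin 26) : |⟬x i, y2⟭| = 1 / 5 := by
  rw [inner_x_y2]
  rcases fEpsPM i with h | h <;> rw [h] <;> norm_num

lemma innerF {a b : Fin 28} (hab : a ≠ b) : |⟬F a, F b⟭| = 1 / 5 := by
  have hval : (a : ℕ) ≠ (b : ℕ) := fun h => hab (Fin.ext h)
  by_cases ha : (a : ℕ) < 26 <;> by_cases hb : (b : ℕ) < 26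
  · rw [F_lt a ha, F_lt b hb]
    exact abs_inner_x_x (by simp [Fin.ext_iff]; omega)
  · rw [F_lt a ha]
    by_cases hb6 : (b : ℕ) = 26
    · have : F b = y1 := by simp [F, hb, hb6]
      rw [this]; exact abs_inner_x_y1 _
    · have : F b = y2 := by simp [F, hb, hb6]
      rw [this]; exact abs_inner_x_y2 _
  · rw [F_lt b hb, real_inner_comm]
    by_cases ha6 : (a : ℕ) = 26
    · have : F a = y1 := by simp [F, ha, ha6]
      rw [this]; exact abs_inner_x_y1 _
    · have : F a = y2 := by simp [F, ha, ha6]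
      rw [this]; exact abs_inner_x_y2 _
  · by_cases ha6 : (a : ℕ) = 26 <;> by_cases hb6 : (b : ℕ) = 26
    · omega
    · have h1 : F a = y1 := by simp [F, ha, ha6]
      have h2 : F b = y2 := by simp [F, hb, hb6]
      rw [h1, h2, inner_y1_y2]; norm_num
    · have h1 : F a = y2 := by simp [F, ha, ha6]
      have h2 : F b = y1 := by simp [F, hb, hb6]
      rw [h1, h2, real_inner_comm, inner_y1_y2]; norm_num
    · omega

lemma F_inj : Function.Injective F := by
  intro a b hab
  by_contra hne
  have h1 := innerF hne
  rw [hab, real_inner_self_eq_norm_sq, normF] at h1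
  norm_num at h1

set_option maxHeartbeats 1000000 in
theorem satE (w z : E) (hw : w ∈ W0) (hz : z ∈ Submodule.span ℝ ({ee} : Set E))
    (hu : ‖w + z‖ = 1) (hip : ∀ k : Fin 28, |⟬w + z, F k⟭| = 1 / 5) : False := by
  obtain ⟨c, rfl⟩ := Submodule.mem_span_singleton.1 hz
  have hwee : ⟬w, ee⟭ = (0 : ℝ) := W0_le_K1 hw
  have hframe : (∑ i : Fin 26, ⟬w, x i⟭ • x i) = (2 : ℝ) • w := W0_le_K2 hw
  have heex : ∀ i : Fin 26, ⟬ee, x i⟭ = (0 : ℝ) := fun i => by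
    rw [real_inner_comm]; exact inner_x_ee i
  have hdw : ∀ i : Fin 26, ⟬w, x i⟭ = ⟬w + c • ee, x i⟭ := fun i => by
    simp only [inner_add_left, real_inner_smul_left, heex i]
    ring
  have habs : ∀ i : Fin 26, |⟬w + c • ee, x i⟭| = 1 / 5 := by
    intro i
    have h := hip ⟨i.1, by omega⟩
    rwa [F_x i] at h
  have hd2 : ∀ i : Fin 26, ⟬w + c • ee, x i⟭ * ⟬w + c • ee, x i⟭ = 1 / 25 := by
    intro i
    have h := habs i
    nlinarith [sq_abs (⟬w + c • ee, x i⟭ : ℝ)]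
  have hinner2 : ⟬w, (2 : ℝ) • w⟭ = ∑ i : Fin 26, ⟬w + c • ee, x i⟭ * ⟬w + c • ee, x i⟭ := by
    rw [← hframe, inner_sum]
    exact Finset.sum_congr rfl fun i _ => by rw [real_inner_smul_right, hdw i]
  have hww : ⟬w, w⟭ = 13 / 25 := by
    have h26 : ∑ i : Fin 26, ⟬w + c • ee, x i⟭ * ⟬w + c • ee, x i⟭ = 26 / 25 := by
      rw [Finset.sum_congr rfl fun i _ => hd2 i, Finset.sum_const]
      simp
      norm_num
    rw [real_inner_smul_right, h26] at hinner2
    linarith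
  have hc2 : c ^ 2 = 12 / 25 := by
    have hn := norm_add_sq_real w (c • ee)
    rw [hu] at hn
    have h1 : ⟬w, c • ee⟭ = (0 : ℝ) := by rw [real_inner_smul_right, hwee]; ring
    have h2 : ‖c • ee‖ = |c| := by rw [norm_smul, norm_ee, Real.norm_eq_abs, mul_one]
    have h3 : ‖w‖ ^ 2 = 13 / 25 := by rw [← real_inner_self_eq_norm_sq, hww]
    rw [h1, h2, h3] at hn
    nlinarith [sq_abs c]
  -- inner products with y1, y2
  have hsx : s50 • vecE one26 = (10 : ℝ)⁻¹ • ∑ i : Fin 26, x i := by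
    have h1 : (∑ i : Fin 26, x i) = s50 • ((10 : ℝ) • vecE one26) := by
      rw [← combo_sum, Finset.smul_sum]
      exact Finset.sum_congr rfl fun i _ => by rw [one_smul]; rfl
    rw [h1]
    simp only [smul_smul]
    congr 1
    ring
  have hsex : s50 • vecE eps2 = (10 : ℝ)⁻¹ • ∑ i : Fin 26, ((eps2.getD i 0 : ℤ) : ℝ) • x i := by
    have h1 : (∑ i : Fin 26, ((eps2.getD i 0 : ℤ) : ℝ) • x i) = s50 • ((10 : ℝ) • vecE eps2) := by
      rw [← combo_epsSum, Finset.smul_sum]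
      refine Finset.sum_congr rfl fun i _ => ?_
      rw [x, smul_smul, smul_smul]
      congr 1
      ring
    rw [h1]
    simp only [smul_smul]
    congr 1
    ring
  have huee : ⟬w + c • ee, ee⟭ = c := by
    simp only [inner_add_left, real_inner_smul_left, hwee, inner_ee_ee]
    ring
  have hA : ⟬w + c • ee, s50 • vecE one26⟭
      = 10⁻¹ * ∑ i : Fin 26, ⟬w + c • ee, x i⟭ := by
    rw [hsx, real_inner_smul_right, inner_sum]
  have hB : ⟬w + c • ee, s50 • vecE eps2⟭
      = 10⁻¹ * ∑ i : Fin 26, ((eps2.getD i 0 : ℤ) : ℝ) * ⟬w + c • ee, x i⟭ := by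
    rw [hsex, real_inner_smul_right, inner_sum]
    congr 1
    exact Finset.sum_congr rfl fun i _ => by rw [real_inner_smul_right]
  have huy1 : ⟬w + c • ee, y1⟭
      = 10⁻¹ * (∑ i : Fin 26, ⟬w + c • ee, x i⟭) + q12 * c := by
    rw [y1, inner_add_right, hA, real_inner_smul_right, huee]
  have huy2 : ⟬w + c • ee, y2⟭
      = 10⁻¹ * (∑ i : Fin 26, ((eps2.getD i 0 : ℤ) : ℝ) * ⟬w + c • ee, x i⟭) - q12 * c := by
    rw [y2, inner_sub_right, hB, real_inner_smul_right, huee]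
  have h15y1 : |⟬w + c • ee, y1⟭| = 1 / 5 := by
    have h := hip ⟨26, by omega⟩
    rwa [F_y1] at h
  have h15y2 : |⟬w + c • ee, y2⟭| = 1 / 5 := by
    have h := hip ⟨27, by omega⟩
    rwa [F_y2] at h
  -- bounds
  have hs_le : |∑ i : Fin 26, ⟬w + c • ee, x i⟭| ≤ 26 / 5 := by
    calc |∑ i : Fin 26, ⟬w + c • ee, x i⟭| ≤ ∑ i : Fin 26, |⟬w + c • ee, x i⟭| :=
          Finset.abs_sum_le_sum_abs _ _
    _ = 26 / 5 := by
        rw [Finset.sum_congr rfl fun i _ => habs i, Finset.sum_const]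
        simp
        norm_num
  have ht_le : |∑ i : Fin 26, ((eps2.getD i 0 : ℤ) : ℝ) * ⟬w + c • ee, x i⟭| ≤ 26 / 5 := by
    have heach : ∀ i : Fin 26, |((eps2.getD i 0 : ℤ) : ℝ) * ⟬w + c • ee, x i⟭| = 1 / 5 := by
      intro i
      rcases fEpsPM i with h | h <;> rw [h] <;> push_cast
      · rw [one_mul]; exact habs i
      · rw [neg_one_mul, abs_neg]; exact habs i
    calc |∑ i : Fin 26, ((eps2.getD i 0 : ℤ) : ℝ) * ⟬w + c • ee, x i⟭|
        ≤ ∑ i : Fin 26, |((eps2.getD i 0 : ℤ) : ℝ) * ⟬w + c • ee, x i⟭| :=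
          Finset.abs_sum_le_sum_abs _ _
    _ = 26 / 5 := by
        rw [Finset.sum_congr rfl fun i _ => heach i, Finset.sum_const]
        simp
        norm_num
  have hts : |(∑ i : Fin 26, ((eps2.getD i 0 : ℤ) : ℝ) * ⟬w + c • ee, x i⟭)
      - ∑ i : Fin 26, ⟬w + c • ee, x i⟭| ≤ 12 / 5 := by
    have hts_eq : (∑ i : Fin 26, ((eps2.getD i 0 : ℤ) : ℝ) * ⟬w + c • ee, x i⟭)
        - ∑ i : Fin 26, ⟬w + c • ee, x i⟭
        = ∑ i : Fin 26, ((((eps2.getD i 0 : ℤ) : ℝ) - 1) * ⟬w + c • ee, x i⟭) := by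
      rw [← Finset.sum_sub_distrib]
      exact Finset.sum_congr rfl fun i _ => by ring
    have heach : ∀ i : Fin 26, |(((eps2.getD i 0 : ℤ) : ℝ) - 1) * ⟬w + c • ee, x i⟭|
        = ((1 - eps2.getD i 0 : ℤ) : ℝ) * (1 / 5) := by
      intro i
      rcases fEpsPM i with h | h <;> rw [h] <;> push_cast
      · norm_num
      · rw [show (-1 : ℝ) - 1 = -2 by norm_num, abs_mul, habs i]
        norm_num
    have hsum12 : ∑ i : Fin 26, ((1 - eps2.getD i 0 : ℤ) : ℝ) = 12 := by
      exact_mod_cast congrArg (fun z : ℤ => (z : ℝ)) fEps12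
    rw [hts_eq]
    calc |∑ i : Fin 26, ((((eps2.getD i 0 : ℤ) : ℝ) - 1) * ⟬w + c • ee, x i⟭)|
        ≤ ∑ i : Fin 26, |(((eps2.getD i 0 : ℤ) : ℝ) - 1) * ⟬w + c • ee, x i⟭| :=
          Finset.abs_sum_le_sum_abs _ _
    _ = (∑ i : Fin 26, ((1 - eps2.getD i 0 : ℤ) : ℝ)) * (1 / 5) := by
        rw [Finset.sum_congr rfl fun i _ => heach i, ← Finset.sum_mul]
    _ = 12 / 5 := by rw [hsum12]; norm_num
  -- final contradiction
  have hr : q12 * c = 12 / 25 ∨ q12 * c = -(12 / 25) := by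
    have hq2 : (q12 * c) ^ 2 = (12 / 25) ^ 2 := by
      have := q12_sq
      nlinarith [hc2]
    have habsr : |q12 * c| = 12 / 25 := by
      nlinarith [sq_abs (q12 * c), abs_nonneg (q12 * c)]
    exact (abs_eq (by norm_num)).1 habsr
  obtain ⟨hs1, hs2⟩ := abs_le.1 hs_le
  obtain ⟨ht1, ht2⟩ := abs_le.1 ht_le
  obtain ⟨hts1, hts2⟩ := abs_le.1 hts
  rcases (abs_eq (by norm_num : (0:ℝ) ≤ 1/5)).1 h15y1 with h1 | h1 <;>
    rcases (abs_eq (by norm_num : (0:ℝ) ≤ 1/5)).1 h15y2 with h2 | h2 <;>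
    rw [huy1] at h1 <;> rw [huy2] at h2 <;>
    rcases hr with hr | hr <;>
    rw [hr] at h1 h2 <;>
    linarith

lemma spanF_le :
    Submodule.span ℝ (Set.range F) ≤ W0 ⊔ Submodule.span ℝ ({ee} : Set E) := by
  rw [Submodule.span_le]
  rintro _ ⟨k, rfl⟩
  by_cases h : (k : ℕ) < 26
  · exact Submodule.mem_sup_left (by rw [F_lt k h]; exact x_mem_W0 _)
  · by_cases h6 : (k : ℕ) = 26
    · have hF : F k = y1 := by simp [F, h, h6]
      rw [hF, y1]
      exact Submodule.add_mem_sup svec_one_mem_W0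
        (Submodule.smul_mem _ _ (Submodule.mem_span_singleton_self ee))
    · have hF : F k = y2 := by simp [F, h, h6]
      rw [hF, y2, sub_eq_add_neg, ← neg_smul]
      exact Submodule.add_mem_sup svec_eps_mem_W0
        (Submodule.smul_mem _ _ (Submodule.mem_span_singleton_self ee))

lemma ee_ne_zero : ee ≠ 0 := by
  intro h
  have := norm_ee
  rw [h, norm_zero] at this
  norm_num at this

lemma finrank_spanF :
    Module.finrank ℝ (Submodule.span ℝ (Set.range F)) ≤ 14 := by
  classical
  have h1 : Module.finrank ℝ W0 ≤ 13 := by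
    refine (finrank_span_le_card (Set.range x13)).trans ?_
    rw [Set.toFinset_range]
    exact (Finset.card_image_le).trans (by simp)
  have h2 : Module.finrank ℝ (Submodule.span ℝ ({ee} : Set E)) = 1 :=
    finrank_span_singleton ee_ne_zero
  have h3 := Submodule.finrank_add_le_finrank_add_finrank W0 (Submodule.span ℝ ({ee} : Set E))
  have h4 := Submodule.finrank_mono (R := ℝ) spanF_le
  omega

def embL (n : ℕ) (h : n ≤ 14) :
    EuclideanSpace ℝ (Fin n) →ₗ[ℝ] EuclideanSpace ℝ (Fin 14) where
  toFun z := ∑ i : Fin n, z i • EuclideanSpace.single (Fin.castLE h i) (1 : ℝ)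
  map_add' a b := by
    simp only [PiLp.add_apply, add_smul, Finset.sum_add_distrib]
  map_smul' c a := by
    simp only [PiLp.smul_apply, smul_eq_mul, RingHom.id_apply, mul_smul, ← Finset.smul_sum]

lemma orthonormal_single_castLE (n : ℕ) (h : n ≤ 14) :
    Orthonormal ℝ (fun i : Fin n => EuclideanSpace.single (Fin.castLE h i) (1 : ℝ)) := by
  rw [orthonormal_iff_ite]
  intro i j
  rw [EuclideanSpace.inner_single_left]
  simp [EuclideanSpace.single_apply, Fin.castLE_inj, eq_comm]

def emb (n : ℕ) (h : n ≤ 14) :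
    EuclideanSpace ℝ (Fin n) →ₗᵢ[ℝ] EuclideanSpace ℝ (Fin 14) where
  toLinearMap := embL n h
  norm_map' := by
    intro z
    have hinner : ⟬embL n h z, embL n h z⟭ = ⟬z, z⟭ := by
      have h1 := (orthonormal_single_castLE n h).inner_sum z z Finset.univ
      simp only [conj_trivial] at h1
      have h2 : ⟬z, z⟭ = ∑ i : Fin n, z i * z i := by
        simp only [PiLp.inner_apply, RCLike.inner_apply, conj_trivial]
      rw [show (embL n h z) = ∑ i : Fin n, z i • EuclideanSpace.single (Fin.castLE h i) (1 : ℝ)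
        from rfl, h1, h2]
    rw [norm_eq_sqrt_real_inner, norm_eq_sqrt_real_inner, hinner]

end

end Sat28

open Sat28 in
theorem saturated_equiangular_28_lines_dim_14 :
    ∃ X : Finset (EuclideanSpace ℝ (Fin 14)),
      X.card = 28 ∧
      (∀ v ∈ X, ‖v‖ = 1) ∧
      (∀ v ∈ X, ∀ w ∈ X, v ≠ w → |(inner ℝ v w : ℝ)| = 1 / 5) ∧
      ¬ ∃ u : EuclideanSpace ℝ (Fin 14),
          ‖u‖ = 1 ∧
          u ∈ Submodule.span ℝ (X : Set (EuclideanSpace ℝ (Fin 14))) ∧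
          u ∉ (X : Set (EuclideanSpace ℝ (Fin 14))) ∪
              (-(X : Set (EuclideanSpace ℝ (Fin 14)))) ∧
          (∀ x ∈ X, |(inner ℝ u x : ℝ)| = 1 / 5) := by
  classical
  set T : Submodule ℝ E := Submodule.span ℝ (Set.range F) with hT
  let li : T →ₗᵢ[ℝ] EuclideanSpace ℝ (Fin 14) :=
    (emb _ finrank_spanF).comp (stdOrthonormalBasis ℝ T).repr.toLinearIsometry
  let g : Fin 28 → T := fun k => ⟨F k, Submodule.subset_span ⟨k, rfl⟩⟩
  let FX : Fin 28 → EuclideanSpace ℝ (Fin 14) := fun k => li (g k)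
  have hFXinj : Function.Injective FX := by
    intro a b hab
    exact F_inj (congrArg Subtype.val (li.injective hab))
  have hnormFX : ∀ k, ‖FX k‖ = 1 := fun k => by
    rw [show ‖FX k‖ = ‖g k‖ from li.norm_map (g k)]
    exact normF k
  have hinnerFX : ∀ a b, (inner ℝ (FX a) (FX b) : ℝ) = (inner ℝ (F a) (F b) : ℝ) := fun a b => by
    rw [show (inner ℝ (FX a) (FX b) : ℝ) = (inner ℝ (g a) (g b) : ℝ) from li.inner_map_map _ _]
    rfl
  refine ⟨Finset.image FX Finset.univ, ?_, ?_, ?_, ?_⟩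
  · rw [Finset.card_image_of_injective _ hFXinj, Finset.card_univ, Fintype.card_fin]
  · intro v hv
    obtain ⟨k, -, rfl⟩ := Finset.mem_image.1 hv
    exact hnormFX k
  · intro v hv w hw hvw
    obtain ⟨a, -, rfl⟩ := Finset.mem_image.1 hv
    obtain ⟨b, -, rfl⟩ := Finset.mem_image.1 hw
    have hab : a ≠ b := fun h => hvw (by rw [h])
    rw [hinnerFX a b]
    exact innerF hab
  · rintro ⟨u, hu1, huspan, -, huip⟩
    have hXset : (↑(Finset.image FX Finset.univ) : Set (EuclideanSpace ℝ (Fin 14)))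
        = Set.range FX := by
      rw [Finset.coe_image, Finset.coe_univ, Set.image_univ]
    rw [hXset] at huspan
    have hrange : Set.range FX = ⇑li.toLinearMap '' Set.range g := by
      rw [← Set.range_comp]
      rfl
    rw [hrange, Submodule.span_image] at huspan
    obtain ⟨w, hwspan, hwu⟩ := Submodule.mem_map.1 huspan
    have hwu' : li w = u := hwu
    have hw1 : (w : E) ∈ Submodule.span ℝ (Set.range F) := by
      have h2 : Submodule.map T.subtype (Submodule.span ℝ (Set.range g))
          = Submodule.span ℝ (Set.range F) := by
        rw [Submodule.map_span, ← Set.range_comp]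
        rfl
      rw [← h2]
      exact Submodule.mem_map_of_mem hwspan
    obtain ⟨w0, hw0, z, hz, hwz⟩ := Submodule.mem_sup.1 (spanF_le hw1)
    have hnw : ‖w0 + z‖ = 1 := by
      rw [hwz]
      rw [show ‖(w : E)‖ = ‖w‖ from rfl]
      rw [← li.norm_map w, hwu', hu1]
    refine satE w0 z hw0 hz hnw ?_
    intro k
    have hk : (inner ℝ ((w : E)) (F k) : ℝ) = (inner ℝ u (FX k) : ℝ) := by
      rw [← hwu']
      exact (li.inner_map_map w (g k)).symm
    rw [hwz, hk]
    exact huip (FX k) (Finset.mem_image_of_mem FX (Finset.mem_univ k))
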